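/- Let Σ = Diag(σ_1,…,σ_N) with σ_i > 0 and w > 0. The maximum of w·log det(I + Σ Q̃ Σ) − Tr(Q̃) over positive semidefinite N×N matrices Q̃ is attained at the diagonal matrix Λ = Diag(λ_1,…,λ_N) with λ_i = max(0, w − 1/σ_i²), and the maximum value equals Σ_i [w·log(1 + σ_i² λ_i) − λ_i]. -/

import Mathlib

open Matrix ComplexOrder

private lemma trace_eq_sum_eig {n : Type*} [Fintype n] [DecidableEq n]
    {A : Matrix n n ℂ} (hA : A.IsHermitian) :
    A.trace = ∑ i, (hA.eigenvalues i : ℂ) := by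
  conv_lhs => rw [hA.spectral_theorem]
  rw [Unitary.conjStarAlgAut_apply, Matrix.trace_mul_cycle]
  have h1 : star (hA.eigenvectorUnitary : Matrix n n ℂ) * (hA.eigenvectorUnitary : Matrix n n ℂ) = 1 := by
    simpa using unitary.coe_star_mul_self hA.eigenvectorUnitary
  rw [h1, Matrix.one_mul, Matrix.trace_diagonal]
  simp

private lemma log_det_le_trace {N : ℕ} {M : Matrix (Fin N) (Fin N) ℂ}
    (hM : M.PosSemidef) (hd : 0 < M.det.re) :
    Real.log M.det.re ≤ M.trace.re - N := by
  have hH := hM.isHermitian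
  have hdet : M.det.re = ∏ i, hH.eigenvalues i := by
    rw [hH.det_eq_prod_eigenvalues, ← RCLike.ofReal_prod]; exact Complex.ofReal_re _
  have htr : M.trace.re = ∑ i, hH.eigenvalues i := by
    rw [trace_eq_sum_eig hH, ← Complex.ofReal_sum, Complex.ofReal_re]
  have hnn : ∀ i, 0 ≤ hH.eigenvalues i := hM.eigenvalues_nonneg
  have hne : ∀ i ∈ Finset.univ, hH.eigenvalues i ≠ 0 := by
    intro i _ h0
    rw [hdet, Finset.prod_eq_zero (Finset.mem_univ i) h0] at hd
    exact lt_irrefl 0 hd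
  rw [hdet, Real.log_prod hne, htr]
  have : ∑ i, Real.log (hH.eigenvalues i) ≤ ∑ i : Fin N, (hH.eigenvalues i - 1) := by
    refine Finset.sum_le_sum fun i _ => ?_
    exact Real.log_le_sub_one_of_pos ((hnn i).lt_of_ne (Ne.symm (hne i (Finset.mem_univ i))))
  simpa [Finset.sum_sub_distrib] using this

private lemma percoord {s w q : ℝ} (hs : 0 < s) (hw : 0 < w) (hq : 0 ≤ q) :
    w * ((1 + s * q) / (1 + s * max 0 (w - 1 / s)) - 1) - q ≤ - max 0 (w - 1 / s) := by
  set l := max 0 (w - 1 / s) with hl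
  rcases le_or_gt (w * s) 1 with h | h
  · have hlz : l = 0 := by
      rw [hl]
      apply max_eq_left
      have h1 : w ≤ 1 / s := by rw [le_div_iff₀ hs]; linarith
      linarith
    rw [hlz]
    simp only [mul_zero, add_zero, div_one, add_sub_cancel_left, neg_zero]
    nlinarith
  · have hlz : l = w - 1 / s := by
      rw [hl]
      apply max_eq_right
      have h1 : 1 / s ≤ w := by rw [div_le_iff₀ hs]; linarith
      linarith
    have h1 : 1 + s * l = s * w := by rw [hlz]; field_simp; ring
    rw [h1]
    apply le_of_eq
    rw [hlz]
    field_simp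
    ring

private lemma logdet_le {N : ℕ} {X : Matrix (Fin N) (Fin N) ℂ} (hX : X.PosSemidef)
    (hd : 0 < X.det.re) (y : Fin N → ℝ) (hy : ∀ i, 0 < y i) :
    Real.log X.det.re ≤ ∑ i, ((X i i).re / y i - 1 + Real.log (y i)) := by
  set c : Fin N → ℝ := fun i => (Real.sqrt (y i))⁻¹ with hc
  have hcpos : ∀ i, 0 < c i := fun i => by
    have := Real.sqrt_pos.mpr (hy i); positivity
  have hc2 : ∀ i, c i * c i = (y i)⁻¹ := fun i => by
    rw [hc]; rw [← mul_inv]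
    rw [Real.mul_self_sqrt (hy i).le]
  set D : Matrix (Fin N) (Fin N) ℂ := Matrix.diagonal (fun i => (c i : ℂ)) with hDdef
  have hDH : Dᴴ = D := by
    rw [hDdef, Matrix.diagonal_conjTranspose]
    have hst : (star fun i => ((c i : ℝ) : ℂ)) = fun i => ((c i : ℝ) : ℂ) := by
      funext i
      rw [Pi.star_apply, Complex.star_def]
      exact Complex.conj_ofReal _
    rw [hst]
  set M : Matrix (Fin N) (Fin N) ℂ := D * X * D with hMdef
  have hM : M.PosSemidef := by
    have := hX.conjTranspose_mul_mul_same D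
    rwa [hDH] at this
  have hMdet : M.det = ((∏ i, (y i)⁻¹ : ℝ) : ℂ) * X.det := by
    calc M.det = (∏ i, (c i : ℂ)) * X.det * (∏ i, (c i : ℂ)) := by
          rw [hMdef, Matrix.det_mul, Matrix.det_mul, Matrix.det_diagonal]
      _ = (((∏ i, c i) * (∏ i, c i) : ℝ) : ℂ) * X.det := by push_cast; ring
      _ = _ := by
          congr 2
          rw [← Finset.prod_mul_distrib]
          exact Finset.prod_congr rfl fun i _ => hc2 i
  have hMre : M.det.re = (∏ i, (y i)⁻¹) * X.det.re := by
    rw [hMdet, Complex.re_ofReal_mul]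
  have hprodpos : 0 < ∏ i, (y i)⁻¹ := Finset.prod_pos fun i _ => inv_pos.mpr (hy i)
  have hMdpos : 0 < M.det.re := by rw [hMre]; exact mul_pos hprodpos hd
  have hMii : ∀ i, M i i = (c i : ℂ) * X i i * (c i : ℂ) := fun i => by
    rw [hMdef, hDdef]
    simp [Matrix.mul_diagonal, Matrix.diagonal_mul]
  have htr : M.trace.re = ∑ i, (X i i).re / y i := by
    rw [Matrix.trace, Complex.re_sum]
    refine Finset.sum_congr rfl fun i _ => ?_
    rw [Matrix.diag_apply, hMii i, mul_comm, ← mul_assoc, ← Complex.ofReal_mul,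
      Complex.re_ofReal_mul, hc2 i, div_eq_inv_mul]
  have key := log_det_le_trace hM hMdpos
  rw [hMre, Real.log_mul (ne_of_gt hprodpos) (ne_of_gt hd),
    Real.log_prod (fun i _ => ne_of_gt (inv_pos.mpr (hy i))), htr] at key
  have hlog : ∀ i ∈ Finset.univ, Real.log ((y i)⁻¹) = - Real.log (y i) := fun i _ =>
    Real.log_inv _
  rw [Finset.sum_congr rfl hlog, Finset.sum_neg_distrib] at key
  rw [Finset.sum_add_distrib, Finset.sum_sub_distrib, Finset.sum_const, Finset.card_univ,
    Fintype.card_fin, nsmul_eq_mul, mul_one]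
  linarith

/-- Water-filling solves max over PSD Q̃ of w·log det(I + Σ Q̃ Σ) − Tr(Q̃):
the maximum is attained at Λ with λᵢ = max(0, w − 1/σᵢ²). -/
theorem waterfilling_matrix_max
    {N : ℕ} (σ : Fin N → ℝ) (hσ : ∀ i, 0 < σ i) (w : ℝ) (hw : 0 < w) :
    let Sd : Matrix (Fin N) (Fin N) ℂ := Matrix.diagonal (fun i => (σ i : ℂ))
    let lam : Fin N → ℝ := fun i => max 0 (w - 1 / (σ i) ^ 2)
    let Lam : Matrix (Fin N) (Fin N) ℂ := Matrix.diagonal (fun i => (lam i : ℂ))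
    let val : ℝ := ∑ i, (w * Real.log (1 + (σ i) ^ 2 * lam i) - lam i)
    (w * Real.log ((1 + Sd * Lam * Sd).det).re - (Lam.trace).re = val) ∧
    (∀ Q : Matrix (Fin N) (Fin N) ℂ, Q.PosSemidef →
      w * Real.log ((1 + Sd * Q * Sd).det).re - (Q.trace).re ≤ val) := by
  intro Sd lam Lam val
  have hSd : Sd = Matrix.diagonal (fun i => (σ i : ℂ)) := rfl
  have hLam : Lam = Matrix.diagonal (fun i => (lam i : ℂ)) := rfl
  have hlamdef : ∀ i, lam i = max 0 (w - 1 / σ i ^ 2) := fun _ => rfl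
  have hval : val = ∑ i, (w * Real.log (1 + σ i ^ 2 * lam i) - lam i) := rfl
  have hs : ∀ i, 0 < σ i ^ 2 := fun i => pow_pos (hσ i) 2
  have hlam0 : ∀ i, 0 ≤ lam i := fun i => le_max_left _ _
  have hypos : ∀ i, 0 < 1 + σ i ^ 2 * lam i := fun i => by nlinarith [hs i, hlam0 i]
  constructor
  · have h1 : (1 : Matrix (Fin N) (Fin N) ℂ) + Sd * Lam * Sd
        = Matrix.diagonal (fun i => ((1 + σ i ^ 2 * lam i : ℝ) : ℂ)) := by
      rw [hSd, hLam, Matrix.diagonal_mul_diagonal, Matrix.diagonal_mul_diagonal]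
      ext i j
      by_cases hij : i = j
      · subst hij
        simp only [Matrix.add_apply, Matrix.one_apply_eq, Matrix.diagonal_apply_eq]
        push_cast
        ring
      · simp [Matrix.one_apply, Matrix.diagonal_apply, hij]
    rw [h1, Matrix.det_diagonal, ← Complex.ofReal_prod, Complex.ofReal_re,
      Real.log_prod (fun i _ => ne_of_gt (hypos i)), hLam, Matrix.trace_diagonal,
      ← Complex.ofReal_sum, Complex.ofReal_re, hval, Finset.mul_sum, ← Finset.sum_sub_distrib]
  · intro Q hQ
    have hSdH : Sdᴴ = Sd := by
      rw [hSd, Matrix.diagonal_conjTranspose]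
      have hst : (star fun i => ((σ i : ℝ) : ℂ)) = fun i => ((σ i : ℝ) : ℂ) := by
        funext i
        rw [Pi.star_apply, Complex.star_def]
        exact Complex.conj_ofReal _
      rw [hst]
    have hSQS : (Sd * Q * Sd).PosSemidef := by
      have := hQ.conjTranspose_mul_mul_same Sd
      rwa [hSdH] at this
    have hX : (1 + Sd * Q * Sd).PosDef := Matrix.PosDef.add_posSemidef Matrix.PosDef.one hSQS
    have hdre : 0 < ((1 + Sd * Q * Sd).det).re := by
      have := hX.det_pos
      rw [Complex.lt_def] at this
      simpa using this.1
    have hq : ∀ i, 0 ≤ (Q i i).re := by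
      intro i
      have h0 : (0 : ℂ) ≤ Q i i := hQ.diag_nonneg
      rw [Complex.le_def] at h0
      simpa using h0.1
    have hXii : ∀ i, ((1 + Sd * Q * Sd) i i).re = 1 + σ i ^ 2 * (Q i i).re := by
      intro i
      have h2 : (Sd * Q * Sd) i i = ((σ i ^ 2 : ℝ) : ℂ) * Q i i := by
        rw [hSd]
        simp only [Matrix.mul_diagonal, Matrix.diagonal_mul]
        push_cast
        ring
      rw [Matrix.add_apply, Matrix.one_apply_eq, h2, Complex.add_re, Complex.one_re,
        Complex.re_ofReal_mul]
    have hgen := logdet_le hX.posSemidef hdre (fun i => 1 + σ i ^ 2 * lam i) hypos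
    have htr : (Q.trace).re = ∑ i, (Q i i).re := by
      rw [Matrix.trace, Complex.re_sum]
      rfl
    have hper : ∀ i, w * (((1 + Sd * Q * Sd) i i).re / (1 + σ i ^ 2 * lam i) - 1
          + Real.log (1 + σ i ^ 2 * lam i)) - (Q i i).re
        ≤ w * Real.log (1 + σ i ^ 2 * lam i) - lam i := by
      intro i
      have hp := percoord (hs i) hw (hq i)
      rw [← hlamdef i] at hp
      rw [hXii i]
      have hexp : w * ((1 + σ i ^ 2 * (Q i i).re) / (1 + σ i ^ 2 * lam i) - 1
            + Real.log (1 + σ i ^ 2 * lam i))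
          = w * ((1 + σ i ^ 2 * (Q i i).re) / (1 + σ i ^ 2 * lam i) - 1)
            + w * Real.log (1 + σ i ^ 2 * lam i) := by ring
      rw [hexp]
      linarith
    calc w * Real.log ((1 + Sd * Q * Sd).det).re - Q.trace.re
        ≤ w * (∑ i, (((1 + Sd * Q * Sd) i i).re / (1 + σ i ^ 2 * lam i) - 1
            + Real.log (1 + σ i ^ 2 * lam i))) - Q.trace.re := by
          have := mul_le_mul_of_nonneg_left hgen hw.le
          linarith
      _ = ∑ i, (w * (((1 + Sd * Q * Sd) i i).re / (1 + σ i ^ 2 * lam i) - 1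
            + Real.log (1 + σ i ^ 2 * lam i)) - (Q i i).re) := by
          rw [Finset.mul_sum, htr, ← Finset.sum_sub_distrib]
      _ ≤ ∑ i, (w * Real.log (1 + σ i ^ 2 * lam i) - lam i) :=
          Finset.sum_le_sum fun i _ => hper i
      _ = val := hval.symm
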